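/- Lookback filtering soundness: fix a lookback bound B. Suppose the IndexTable stores only event-pairs (ev_x, ev_y) with ev_y.ts − ev_x.ts ≤ B, generated by the greedy nearest-successor rule restricted to gaps ≤ B. Then for any query with a 'within v' constraint where v ≤ B, a trace contains a constraint-satisfying pair of types (a_1, a_2) if and only if it contains one recoverable from the stored (a_1,a_2) pairs together with the stored (a_1,a_1) pairs; i.e., the lookback restriction causes no false negatives for within-constraints with v ≤ B. -/

import Mathlib

structure Event where
  type : ℕ
  ts : ℤ
deriving DecidableEq

/-- Greedy nearest-successor pair extraction restricted to gaps `≤ B`: each event of the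
first list is paired with the earliest unused event of the second list strictly after it,
provided the gap is at most `B`. -/
def greedyE (B : ℤ) : List Event → List Event → List (Event × Event)
  | [], _ => []
  | x :: xs, ys =>
    match ys.dropWhile (fun y => decide (y.ts ≤ x.ts)) with
    | [] => greedyE B xs ys
    | y :: rest =>
      if y.ts - x.ts ≤ B then (x, y) :: greedyE B xs rest
      else greedyE B xs ys

lemma greedy_mem {B : ℤ} : ∀ (xs ys : List Event), ∀ p ∈ greedyE B xs ys,
    p.1 ∈ xs ∧ p.2 ∈ ys
  | [], ys, p, hp => by simp [greedyE] at hp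
  | x :: xs, ys, p, hp => by
    rw [greedyE] at hp
    rcases hd : ys.dropWhile (fun y => decide (y.ts ≤ x.ts)) with _ | ⟨y, rest⟩
    · rw [hd] at hp
      have := greedy_mem xs ys p hp
      exact ⟨List.mem_cons_of_mem _ this.1, this.2⟩
    · rw [hd] at hp
      replace hp : p ∈ (if y.ts - x.ts ≤ B then (x, y) :: greedyE B xs rest
          else greedyE B xs ys) := hp
      have hsuf : y :: rest <:+ ys := hd ▸ List.dropWhile_suffix _
      have hyys : y ∈ ys := hsuf.subset (by simp)
      have hrest : ∀ z ∈ rest, z ∈ ys := fun z hz => hsuf.subset (by simp [hz])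
      by_cases hB : y.ts - x.ts ≤ B
      · rw [if_pos hB] at hp
        rcases List.mem_cons.mp hp with rfl | hp'
        · exact ⟨by simp, hyys⟩
        · have := greedy_mem xs rest p hp'
          exact ⟨List.mem_cons_of_mem _ this.1, hrest _ this.2⟩
      · rw [if_neg hB] at hp
        have := greedy_mem xs ys p hp
        exact ⟨List.mem_cons_of_mem _ this.1, this.2⟩

lemma greedy_key {B v : ℤ} (hvB : v ≤ B) :
    ∀ (xs ys : List Event), xs.Pairwise (fun a b => a.ts < b.ts) →
    ys.Pairwise (fun a b => a.ts < b.ts) →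
    (∃ x ∈ xs, ∃ y ∈ ys, 0 < y.ts - x.ts ∧ y.ts - x.ts ≤ v) →
    ∃ p ∈ greedyE B xs ys, ∃ x ∈ xs, 0 < p.2.ts - x.ts ∧ p.2.ts - x.ts ≤ v
  | [], ys, _, _, h => by simp at h
  | x :: xs, ys, hxs, hys, h => by
    have hxmin : ∀ z ∈ xs, x.ts < z.ts := fun z hz => (List.pairwise_cons.mp hxs).1 z hz
    have hxs' := (List.pairwise_cons.mp hxs).2
    rcases hd : ys.dropWhile (fun y => decide (y.ts ≤ x.ts)) with _ | ⟨y, rest⟩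
    · -- all ys are ≤ x.ts : contradiction with witness
      exfalso
      have hall : ∀ z ∈ ys, z.ts ≤ x.ts := by
        intro z hz
        have := List.dropWhile_eq_nil_iff.mp hd z hz
        simpa using this
      obtain ⟨x0, hx0, y0, hy0, hpos, _⟩ := h
      have h1 : y0.ts ≤ x.ts := hall y0 hy0
      have h2 : x.ts ≤ x0.ts := by
        rcases List.mem_cons.mp hx0 with rfl | hx0'
        · exact le_refl _
        · exact le_of_lt (hxmin _ hx0')
      omega
    · have hsuf : y :: rest <:+ ys := hd ▸ List.dropWhile_suffix _
      have hyys : y ∈ ys := hsuf.subset (by simp)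
      have hxy : x.ts < y.ts := by
        have hne : ys.dropWhile (fun y => decide (y.ts ≤ x.ts)) ≠ [] := by simp [hd]
        have := List.head_dropWhile_not (fun y => decide (y.ts ≤ x.ts)) (l := ys) hne
        simp only [hd, List.head_cons] at this
        simpa using this
      have hrest_pw : rest.Pairwise (fun a b => a.ts < b.ts) :=
        (List.pairwise_cons.mp (hys.sublist hsuf.sublist)).2
      have hy_rest : ∀ z ∈ rest, y.ts < z.ts :=
        (List.pairwise_cons.mp (hys.sublist hsuf.sublist)).1
      have hsplit : ∀ z ∈ ys, z.ts ≤ x.ts ∨ z ∈ (y :: rest) := by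
        intro z hz
        rw [← List.takeWhile_append_dropWhile (p := fun y => decide (y.ts ≤ x.ts))
          (l := ys), hd] at hz
        rcases List.mem_append.mp hz with hz' | hz'
        · left; simpa using List.mem_takeWhile_imp hz'
        · right; exact hz'
      suffices hgoal : ∃ p ∈ (if y.ts - x.ts ≤ B then (x, y) :: greedyE B xs rest
          else greedyE B xs ys), ∃ x0 ∈ x :: xs, 0 < p.2.ts - x0.ts ∧ p.2.ts - x0.ts ≤ v by
        rw [greedyE, hd]; exact hgoal
      by_cases hB : y.ts - x.ts ≤ B
      · rw [if_pos hB]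
        by_cases hyv : y.ts - x.ts ≤ v
        · exact ⟨(x, y), by simp, x, by simp, by simp; omega, by simpa using hyv⟩
        · obtain ⟨x0, hx0, y0, hy0, hpos, hle⟩ := h
          rcases hsplit y0 hy0 with hy0le | hy0mem
          · exfalso
            have : x.ts ≤ x0.ts := by
              rcases List.mem_cons.mp hx0 with rfl | hx0'
              · exact le_refl _
              · exact le_of_lt (hxmin _ hx0')
            omega
          rcases List.mem_cons.mp hy0mem with rfl | hy0rest
          · exact ⟨(x, y0), by simp, x0, hx0, hpos, hle⟩
          · have hx0xs : x0 ∈ xs := by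
              rcases List.mem_cons.mp hx0 with rfl | hx0'
              · exfalso; have := hy_rest y0 hy0rest; omega
              · exact hx0'
            obtain ⟨p, hp, x', hx', h1, h2⟩ :=
              greedy_key hvB xs rest hxs' hrest_pw ⟨x0, hx0xs, y0, hy0rest, hpos, hle⟩
            exact ⟨p, List.mem_cons_of_mem _ hp, x', List.mem_cons_of_mem _ hx', h1, h2⟩
      · rw [if_neg hB]
        obtain ⟨x0, hx0, y0, hy0, hpos, hle⟩ := h
        have hx0xs : x0 ∈ xs := by
          rcases List.mem_cons.mp hx0 with rfl | hx0'
          · exfalso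
            rcases hsplit y0 hy0 with hy0le | hy0mem
            · omega
            · rcases List.mem_cons.mp hy0mem with rfl | hy0rest
              · omega
              · have := hy_rest y0 hy0rest; omega
          · exact hx0'
        obtain ⟨p, hp, x', hx', h1, h2⟩ :=
          greedy_key hvB xs ys hxs' hys ⟨x0, hx0xs, y0, hy0, hpos, hle⟩
        exact ⟨p, hp, x', List.mem_cons_of_mem _ hx', h1, h2⟩

lemma mem_tail_zip : ∀ (l : List Event) (x : Event), x ∈ l.tail →
    ∃ p ∈ l.zip l.tail, p.2 = x
  | [], x, h => absurd h (by simp)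
  | [a], x, h => absurd h (by simp)
  | a :: b :: r, x, h => by
    simp only [List.tail_cons] at h
    rcases List.mem_cons.mp h with rfl | h'
    · exact ⟨(a, x), by simp [List.zip_cons_cons], rfl⟩
    · obtain ⟨p, hp, he⟩ := mem_tail_zip (b :: r) x h'
      refine ⟨p, ?_, he⟩
      simp only [List.tail_cons] at hp ⊢
      rw [List.zip_cons_cons]
      exact List.mem_cons_of_mem _ hp

/-- Lookback filtering soundness: if the index stores only the greedy
`(a1,a2)` pairs with gap `≤ B` together with the consecutive `(a1,a1)` pairs (all of
whose gaps are assumed `≤ B`), then for a `within v` constraint with `v ≤ B`, the trace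
contains a constraint-satisfying pair of types `(a1,a2)` iff it contains one both of
whose events are recoverable from the stored pairs — no false negatives. -/
theorem stmt16 (t : List Event) (ht : t.Chain' (fun e1 e2 => e1.ts < e2.ts))
    (a1 a2 : ℕ) (ha : a1 ≠ a2) (B v : ℤ) (hv : 0 < v) (hvB : v ≤ B)
    (stored12 stored11 : List (Event × Event))
    (h12 : stored12 = greedyE B (t.filter (fun ev => decide (ev.type = a1)))
                                (t.filter (fun ev => decide (ev.type = a2))))
    (h11 : stored11 = (t.filter (fun ev => decide (ev.type = a1))).zip
                      (t.filter (fun ev => decide (ev.type = a1))).tail)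
    (hgaps : ∀ p ∈ stored11, p.2.ts - p.1.ts ≤ B) :
    ((∃ ex ∈ t, ∃ ey ∈ t, ex.type = a1 ∧ ey.type = a2 ∧
        0 < ey.ts - ex.ts ∧ ey.ts - ex.ts ≤ v) ↔
     (∃ ex ∈ t, ∃ ey ∈ t,
        ((∃ p ∈ stored12, p.1 = ex ∨ p.2 = ex) ∨ (∃ p ∈ stored11, p.1 = ex ∨ p.2 = ex)) ∧
        ((∃ p ∈ stored12, p.1 = ey ∨ p.2 = ey) ∨ (∃ p ∈ stored11, p.1 = ey ∨ p.2 = ey)) ∧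
        ex.type = a1 ∧ ey.type = a2 ∧ 0 < ey.ts - ex.ts ∧ ey.ts - ex.ts ≤ v)) := by
  set xs := t.filter (fun ev => decide (ev.type = a1)) with hxs
  set ys := t.filter (fun ev => decide (ev.type = a2)) with hys
  haveI : IsTrans Event (fun a b => a.ts < b.ts) := ⟨fun _ _ _ h1 h2 => lt_trans h1 h2⟩
  have htpw : t.Pairwise (fun a b => a.ts < b.ts) :=
    List.isChain_iff_pairwise.mp ht
  have hxspw : xs.Pairwise (fun a b => a.ts < b.ts) :=
    htpw.sublist List.filter_sublist
  have hyspw : ys.Pairwise (fun a b => a.ts < b.ts) :=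
    htpw.sublist List.filter_sublist
  constructor
  · rintro ⟨ex, hext, ey, heyt, hexty, heyty, hpos, hle⟩
    have hexxs : ex ∈ xs := List.mem_filter.mpr ⟨hext, by simp [hexty]⟩
    have heyys : ey ∈ ys := List.mem_filter.mpr ⟨heyt, by simp [heyty]⟩
    obtain ⟨p, hp, x', hx', h1, h2⟩ := greedy_key hvB xs ys hxspw hyspw
      ⟨ex, hexxs, ey, heyys, hpos, hle⟩
    have hpm := greedy_mem xs ys p hp
    have hx't : x' ∈ t := List.mem_filter.mp hx' |>.1
    have hx'ty : x'.type = a1 := by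
      have := List.mem_filter.mp hx' |>.2; simpa using this
    have hp2t : p.2 ∈ t := List.mem_filter.mp hpm.2 |>.1
    have hp2ty : p.2.type = a2 := by
      have := List.mem_filter.mp hpm.2 |>.2; simpa using this
    refine ⟨x', hx't, p.2, hp2t, ?_, ?_, hx'ty, hp2ty, h1, h2⟩
    · -- x' recoverable
      rcases hxl : xs with _ | ⟨a, l⟩
      · rw [hxl] at hx'; simp at hx'
      rcases List.mem_cons.mp (hxl ▸ hx') with rfl | hx'tail
      · -- x' = a, head of xs
        rcases hl : l with _ | ⟨b, r⟩
        · -- xs = [x'] : then p.1 = x', recoverable from stored12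
          left
          have : p.1 ∈ xs := hpm.1
          rw [hxl, hl] at this
          simp at this
          exact ⟨p, h12 ▸ hp, Or.inl this⟩
        · right
          refine ⟨(x', b), ?_, Or.inl rfl⟩
          rw [h11, hxl, hl]
          simp [List.zip_cons_cons]
      · right
        obtain ⟨p', hp', he⟩ := mem_tail_zip xs x' (by rw [hxl]; simpa using hx'tail)
        exact ⟨p', h11 ▸ hp', Or.inr he⟩
    · -- p.2 recoverable from stored12
      exact Or.inl ⟨p, h12 ▸ hp, Or.inr rfl⟩
  · rintro ⟨ex, hext, ey, heyt, _, _, hexty, heyty, hpos, hle⟩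
    exact ⟨ex, hext, ey, heyt, hexty, heyty, hpos, hle⟩
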